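/- Let 𝒢 be a leveled graph over a finite set Q with |Q| = n and let F ⊆ Q. Then 𝒢 is co-Büchi accepting if and only if 𝒢 admits an odd co-Büchi ranking. -/

import Mathlib

/-!
STATEMENT 0: Let 𝒢 be a leveled graph over a finite set Q with |Q| = n and let
F ⊆ Q. Then 𝒢 is co-Büchi accepting if and only if 𝒢 admits an odd co-Büchi
ranking.

A leveled graph over `Q` has vertex set `Q × ℕ`, and every edge goes from one
level to the next. `𝒢` is co-Büchi accepting if every infinite path visits
`F`-vertices only finitely often. A co-Büchi ranking is `f : Q × ℕ → {0,…,2n}`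
with `f(v)` odd → `v` not an `F`-vertex, and non-increasing along edges; it is
odd if every infinite path visits infinitely many odd-ranked vertices.
-/

namespace CoBuchiKV

open Set

variable {Q : Type} [Fintype Q] (E : Q × ℕ → Q × ℕ → Prop) (F : Set Q)

/-- Edge relation restricted to a subgraph `S`. -/
def Er (S : Set (Q × ℕ)) (v w : Q × ℕ) : Prop := v ∈ S ∧ w ∈ S ∧ E v w

/-- Vertices reachable from `v` inside `S`. -/
def Reach (S : Set (Q × ℕ)) (v : Q × ℕ) : Set (Q × ℕ) :=
  {w | Relation.ReflTransGen (Er E S) v w}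

def FiniteIn (S : Set (Q × ℕ)) (v : Q × ℕ) : Prop := v ∈ S ∧ (Reach E S v).Finite

def FFree (S : Set (Q × ℕ)) (v : Q × ℕ) : Prop :=
  v ∈ S ∧ ∀ w ∈ Reach E S v, w.1 ∉ F

def Rem (S : Set (Q × ℕ)) (k : ℕ) : Set (Q × ℕ) :=
  if Even k then {v | FiniteIn E S v} else {v | FFree E F S v}

def Gr : ℕ → Set (Q × ℕ)
  | 0 => Set.univ
  | k + 1 => Gr k \ Rem E F (Gr k) k

noncomputable def rk (v : Q × ℕ) : ℕ := sInf {k | v ∉ Gr E F (k + 1)}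

variable {E F}

lemma self_mem_reach {S : Set (Q × ℕ)} {v : Q × ℕ} : v ∈ Reach E S v :=
  Relation.ReflTransGen.refl

lemma reach_mem {S : Set (Q × ℕ)} {v w : Q × ℕ} (hv : v ∈ S)
    (hw : w ∈ Reach E S v) : w ∈ S := by
  induction hw with
  | refl => exact hv
  | tail _ h _ => exact h.2.1

lemma reach_trans {S : Set (Q × ℕ)} {v w : Q × ℕ} (hw : w ∈ Reach E S v) :
    Reach E S w ⊆ Reach E S v := fun _ hx => Relation.ReflTransGen.trans hw hx

lemma reach_level (hE : ∀ v v' : Q × ℕ, E v v' → v'.2 = v.2 + 1)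
    {S : Set (Q × ℕ)} {v w : Q × ℕ} (hw : w ∈ Reach E S v) :
    v.2 ≤ w.2 ∧ (w.2 ≤ v.2 → w = v) := by
  induction hw with
  | refl => exact ⟨le_rfl, fun _ => rfl⟩
  | tail h he ih =>
    have := hE _ _ he.2.2
    refine ⟨by omega, fun hle => absurd hle (by omega)⟩

lemma rem_mem {S : Set (Q × ℕ)} {k : ℕ} {v : Q × ℕ} (h : v ∈ Rem E F S k) : v ∈ S := by
  unfold Rem at h
  split at h
  · exact h.1
  · exact h.1

lemma rem_hered {S : Set (Q × ℕ)} {k : ℕ} {v w : Q × ℕ}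
    (hw : w ∈ Reach E S v) (hwS : w ∈ S) (h : v ∈ Rem E F S k) : w ∈ Rem E F S k := by
  unfold Rem at *
  split at h <;> rename_i hk <;> simp only [hk, if_pos, mem_setOf_eq] at *
  · exact ⟨hwS, h.2.subset (reach_trans hw)⟩
  · exact ⟨hwS, fun x hx => h.2 x (reach_trans hw hx)⟩

lemma Gr_succ_subset (k : ℕ) : Gr E F (k + 1) ⊆ Gr E F k := fun _ h => h.1

lemma Gr_anti {j k : ℕ} (h : j ≤ k) : Gr E F k ⊆ Gr E F j := by
  induction k with
  | zero => simp_all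
  | succ k ih =>
    rcases Nat.lt_or_ge j (k+1) with h' | h'
    · exact ((Gr_succ_subset k).trans (ih (by omega)))
    · have : j = k + 1 := by omega
      subst this; exact subset_rfl

section Rank

variable (hne : ∀ v : Q × ℕ, ∃ k, v ∉ Gr E F (k + 1))
include hne

lemma rk_spec (v : Q × ℕ) : v ∉ Gr E F (rk E F v + 1) :=
  Nat.sInf_mem (hne v)

omit hne in
lemma mem_Gr_of_le {v : Q × ℕ} {k : ℕ} (h : k ≤ rk E F v) : v ∈ Gr E F k := by
  cases k with
  | zero => trivial
  | succ k =>
    by_contra hc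
    exact Nat.notMem_of_lt_sInf (show k < rk E F v by omega) hc

omit hne in
lemma rk_le {v : Q × ℕ} {k : ℕ} (h : v ∉ Gr E F (k + 1)) : rk E F v ≤ k :=
  Nat.sInf_le h

lemma rk_rem (v : Q × ℕ) : v ∈ Rem E F (Gr E F (rk E F v)) (rk E F v) := by
  have h1 := rk_spec hne v
  have h2 := mem_Gr_of_le (le_refl (rk E F v)) (E := E) (F := F)
  by_contra hc
  exact h1 ⟨h2, hc⟩

lemma rk_mono {v w : Q × ℕ} (e : E v w) : rk E F w ≤ rk E F v := by
  set k := rk E F v with hk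
  by_cases hw : w ∈ Gr E F k
  · have hv : v ∈ Gr E F k := mem_Gr_of_le le_rfl
    have hr : v ∈ Rem E F (Gr E F k) k := rk_rem hne v
    have : w ∈ Rem E F (Gr E F k) k :=
      rem_hered (Relation.ReflTransGen.single ⟨hv, hw, e⟩) hw hr
    exact rk_le (fun hc => hc.2 this)
  · rcases Nat.eq_zero_or_pos k with h0 | h0
    · exact absurd (show w ∈ Gr E F 0 by trivial) (h0 ▸ hw)
    · have : rk E F w ≤ k - 1 := rk_le (by
        have : k - 1 + 1 = k := by omega
        rw [this]; exact hw)
      omega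

end Rank

lemma exists_seq {α : Type*} {T : Set α} {R : α → α → Prop}
    (hser : ∀ v ∈ T, ∃ w ∈ T, R v w) {v0 : α} (h0 : v0 ∈ T) :
    ∃ ρ : ℕ → α, ρ 0 = v0 ∧ (∀ i, ρ i ∈ T) ∧ ∀ i, R (ρ i) (ρ (i + 1)) := by
  choose g hg1 hg2 using hser
  let g' : {v // v ∈ T} → {v // v ∈ T} := fun v => ⟨g v.1 v.2, hg1 v.1 v.2⟩
  refine ⟨fun i => (g'^[i] ⟨v0, h0⟩).1, rfl, fun i => (g'^[i] ⟨v0, h0⟩).2, fun i => ?_⟩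
  change R (g'^[i] ⟨v0, h0⟩).1 (g'^[i + 1] ⟨v0, h0⟩).1
  rw [Function.iterate_succ_apply']
  exact hg2 _ _

section Serial

variable (hE : ∀ v v' : Q × ℕ, E v v' → v'.2 = v.2 + 1)
include hE

/-- Every vertex surviving an even-stage pruning has a successor that survives. -/
lemma serial {k : ℕ} (hk : Even k) {v : Q × ℕ} (hv : v ∈ Gr E F (k + 1)) :
    ∃ w ∈ Gr E F (k + 1), Er E (Gr E F (k + 1)) v w := by
  have hvk : v ∈ Gr E F k := hv.1
  have hinf : ¬ (Reach E (Gr E F k) v).Finite := by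
    intro hfin
    exact hv.2 (by unfold Rem; rw [if_pos hk]; exact ⟨hvk, hfin⟩)
  -- successors of v within Gr k
  set succs : Set (Q × ℕ) := {w | Er E (Gr E F k) v w} with hsuccs
  have hsf : succs.Finite := by
    apply Set.Finite.subset ((Set.finite_univ (α := Q)).prod (Set.finite_singleton (v.2 + 1)))
    rintro w ⟨_, _, hw⟩
    exact ⟨trivial, hE _ _ hw⟩
  by_contra hc
  push_neg at hc
  -- every successor in Gr (k+1) fails, so every successor has finite reach
  have hall : ∀ w ∈ succs, (Reach E (Gr E F k) w).Finite := by
    intro w hw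
    by_contra hwinf
    have hw1 : w ∈ Gr E F (k + 1) := by
      refine ⟨hw.2.1, fun hrem => ?_⟩
      unfold Rem at hrem; rw [if_pos hk] at hrem
      exact hwinf hrem.2
    exact hc w hw1 ⟨hv, hw1, hw.2.2⟩
  apply hinf
  have : Reach E (Gr E F k) v ⊆ {v} ∪ ⋃ w ∈ succs, Reach E (Gr E F k) w := by
    intro x hx
    rcases (Relation.ReflTransGen.cases_head hx) with h | ⟨u, hu, hx'⟩
    · left; simp [h]
    · right; exact Set.mem_biUnion hu hx'
  exact Set.Finite.subset ((Set.finite_singleton v).union (Set.Finite.biUnion hsf hall)) this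

lemma path_level {ρ : ℕ → Q × ℕ} (hp : ∀ i, E (ρ i) (ρ (i + 1))) (i : ℕ) :
    (ρ i).2 = (ρ 0).2 + i := by
  induction i with
  | zero => rfl
  | succ i ih => have := hE _ _ (hp i); omega

end Serial

lemma eventually_const {g : ℕ → ℕ} (hstep : ∀ i, g (i + 1) ≤ g i) :
    ∃ N, ∀ i, N ≤ i → g i = g N := by
  have gle : ∀ i j, g (i + j) ≤ g i := by
    intro i j
    induction j with
    | zero => exact le_rfl
    | succ j ih => exact le_trans (hstep (i + j)) ih
  obtain ⟨N, hN⟩ := Nat.sInf_mem (Set.range_nonempty g)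
  refine ⟨N, fun i hi => le_antisymm ?_ ?_⟩
  · have := gle N (i - N)
    rwa [Nat.add_sub_cancel' hi] at this
  · rw [hN]; exact Nat.sInf_le ⟨i, rfl⟩

section Acc

variable (hE : ∀ v v' : Q × ℕ, E v v' → v'.2 = v.2 + 1)
variable (hacc : ∀ ρ : ℕ → Q × ℕ, (∀ i, E (ρ i) (ρ (i + 1))) → {i | (ρ i).1 ∈ F}.Finite)
include hE hacc

lemma ffree_exists {k : ℕ} (hk : Even k) (hSne : (Gr E F (k + 1)).Nonempty) :
    ∃ w, FFree E F (Gr E F (k + 1)) w := by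
  by_contra hc
  push_neg at hc
  set S := Gr E F (k + 1) with hS
  -- every vertex of S can reach an F-vertex within S
  have hreachF : ∀ v ∈ S, ∃ w ∈ Reach E S v, w.1 ∈ F := by
    intro v hv
    have := hc v
    unfold FFree at this
    push_neg at this
    rcases this hv with ⟨w, hw1, hw2⟩
    exact ⟨w, hw1, hw2⟩
  -- distance to the nearest reachable F-vertex
  set d : Q × ℕ → ℕ := fun v => sInf {m | ∃ w ∈ Reach E S v, w.1 ∈ F ∧ w.2 = v.2 + m}
    with hd
  have hdspec : ∀ v ∈ S, ∃ w ∈ Reach E S v, w.1 ∈ F ∧ w.2 = v.2 + d v := by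
    intro v hv
    obtain ⟨w, hw1, hw2⟩ := hreachF v hv
    have hne : {m | ∃ w ∈ Reach E S v, w.1 ∈ F ∧ w.2 = v.2 + m}.Nonempty := by
      refine ⟨w.2 - v.2, w, hw1, hw2, ?_⟩
      have := (reach_level hE hw1).1
      omega
    exact Nat.sInf_mem hne
  -- the step relation: take any edge, decreasing d unless at an F-vertex
  set R : Q × ℕ → Q × ℕ → Prop := fun v u => Er E S v u ∧ (v.1 ∈ F ∨ d u < d v) with hR
  have hser : ∀ v ∈ S, ∃ u ∈ S, R v u := by
    intro v hv
    obtain ⟨w, hw1, hwF, hwl⟩ := hdspec v hv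
    rcases Nat.eq_zero_or_pos (d v) with h0 | h0
    · -- w is at the same level, so w = v and v is an F-vertex
      have hwv : w = v := (reach_level hE hw1).2 (by omega)
      obtain ⟨u, huS, hu⟩ := serial hE hk hv
      exact ⟨u, huS, hu, Or.inl (hwv ▸ hwF)⟩
    · -- take the first step of the path to w
      rcases Relation.ReflTransGen.cases_head hw1 with heq | ⟨u, hu, hw'⟩
      · exfalso; subst heq; omega
      · have huS : u ∈ S := hu.2.1
        have hul : u.2 = v.2 + 1 := hE _ _ hu.2.2
        have : d u ≤ d v - 1 := Nat.sInf_le ⟨w, hw', hwF, by omega⟩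
        exact ⟨u, huS, hu, Or.inr (by omega)⟩
  obtain ⟨v0, hv0⟩ := hSne
  obtain ⟨ρ, hρ0, hρS, hρR⟩ := exists_seq hser hv0
  have hp : ∀ i, E (ρ i) (ρ (i + 1)) := fun i => (hρR i).1.2.2
  have hfin := hacc ρ hp
  obtain ⟨N, hN⟩ := hfin.bddAbove
  have hdesc : ∀ j, d (ρ (N + 1 + j + 1)) < d (ρ (N + 1 + j)) := by
    intro j
    rcases (hρR (N + 1 + j)).2 with hF | hlt
    · exact absurd (hN hF) (by omega)
    · exact hlt
  have hbound : ∀ j, d (ρ (N + 1 + j)) + j ≤ d (ρ (N + 1)) := by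
    intro j
    induction j with
    | zero => simp
    | succ j ih =>
      have h1 := hdesc j
      have heq : N + 1 + (j + 1) = N + 1 + j + 1 := by omega
      rw [heq]
      omega
  have := hbound (d (ρ (N + 1)) + 1)
  omega

lemma width : ∀ i : ℕ, ∃ L, ∀ l, L ≤ l →
    ({q | (q, l) ∈ Gr E F (2 * i)}).ncard ≤ Fintype.card Q - i := by
  intro i
  induction i with
  | zero =>
    refine ⟨0, fun l _ => ?_⟩
    simp only [Nat.sub_zero]
    calc ({q | (q, l) ∈ Gr E F 0}).ncard ≤ (Set.univ : Set Q).ncard :=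
          Set.ncard_le_ncard (Set.subset_univ _) Set.finite_univ
      _ = Fintype.card Q := by rw [Set.ncard_univ, Nat.card_eq_fintype_card]
  | succ i ih =>
    obtain ⟨L, hL⟩ := ih
    have h2 : 2 * (i + 1) = (2 * i + 1) + 1 := by ring
    set S := Gr E F (2 * i + 1) with hS
    rcases Set.eq_empty_or_nonempty S with hSe | hSne
    · refine ⟨0, fun l _ => ?_⟩
      have : {q | (q, l) ∈ Gr E F (2 * (i + 1))} = ∅ := by
        ext q
        simp only [Set.mem_setOf_eq, Set.mem_empty_iff_false, iff_false]
        intro hc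
        have : (q, l) ∈ S := by rw [h2] at hc; exact hc.1
        rw [hSe] at this; exact this
      rw [this]; simp
    · obtain ⟨w0, hw0⟩ := ffree_exists hE hacc (even_two_mul i) hSne
      have hw0S : w0 ∈ S := hw0.1
      have hser : ∀ v ∈ S, ∃ w ∈ S, Er E S v w := fun v hv =>
        serial hE (even_two_mul i) hv
      obtain ⟨ρ, hρ0, hρS, hρE⟩ := exists_seq hser hw0S
      have hp : ∀ i, E (ρ i) (ρ (i + 1)) := fun i => (hρE i).2.2
      have hlvl : ∀ j, (ρ j).2 = w0.2 + j := by
        intro j; have := path_level hE hp j; rw [hρ0] at this; exact this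
      have hreach : ∀ j, ρ j ∈ Reach E S w0 := by
        intro j
        induction j with
        | zero => rw [hρ0]; exact self_mem_reach
        | succ j ihj => exact Relation.ReflTransGen.tail ihj (hρE j)
      refine ⟨max L w0.2, fun l hl => ?_⟩
      set x := ρ (l - w0.2) with hx
      have hxl : x.2 = l := by rw [hx, hlvl]; omega
      have hxS : x ∈ S := hρS _
      have hxff : FFree E F S x :=
        ⟨hxS, fun w hw => hw0.2 w (reach_trans (hreach _) hw)⟩
      have hxrem : x ∈ Rem E F S (2 * i + 1) := by
        unfold Rem
        rw [if_neg (by simp [Nat.even_add_one, Nat.even_mul])]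
        exact hxff
      have hxout : x ∉ Gr E F (2 * (i + 1)) := by
        rw [h2]; exact fun hc => hc.2 hxrem
      have hxGr : x ∈ Gr E F (2 * i) := hxS.1
      set B := {q | (q, l) ∈ Gr E F (2 * i)} with hB
      have hxB : x.1 ∈ B := by
        have : (x.1, l) = x := by rw [← hxl]
        simpa [hB, this] using hxGr
      have hAB : {q | (q, l) ∈ Gr E F (2 * (i + 1))} ⊆ B \ {x.1} := by
        intro q hq
        constructor
        · have : (q, l) ∈ Gr E F (2 * (i + 1)) := hq
          rw [h2] at this
          exact this.1.1
        · intro hqx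
          simp only [Set.mem_singleton_iff] at hqx
          apply hxout
          have : (q, l) = x := by rw [hqx, ← hxl]
          rw [← this]; exact hq
      have hBfin : B.Finite := Set.toFinite B
      have h1 : ({q | (q, l) ∈ Gr E F (2 * (i + 1))}).ncard ≤ (B \ {x.1}).ncard :=
        Set.ncard_le_ncard hAB (hBfin.diff)
      have h2' : (B \ {x.1}).ncard < B.ncard :=
        Set.ncard_diff_singleton_lt_of_mem hxB hBfin
      have h3 : B.ncard ≤ Fintype.card Q - i := hL l (le_trans (le_max_left _ _) hl)
      omega

lemma all_notmem : ∀ v : Q × ℕ, v ∉ Gr E F (2 * Fintype.card Q + 1) := by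
  obtain ⟨L, hL⟩ := width hE hacc (Fintype.card Q)
  have hempty : ∀ l, L ≤ l → ∀ q : Q, (q, l) ∉ Gr E F (2 * Fintype.card Q) := by
    intro l hl q hq
    have h0 := hL l hl
    rw [Nat.sub_self] at h0
    have : ({q | (q, l) ∈ Gr E F (2 * Fintype.card Q)}).ncard = 0 := by omega
    rw [Set.ncard_eq_zero (Set.toFinite _)] at this
    have hq' : q ∈ {q | (q, l) ∈ Gr E F (2 * Fintype.card Q)} := hq
    rw [this] at hq'
    exact hq'
  intro v hv
  have hv2n : v ∈ Gr E F (2 * Fintype.card Q) := hv.1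
  have hfin : (Reach E (Gr E F (2 * Fintype.card Q)) v).Finite := by
    apply Set.Finite.subset (Set.finite_univ.prod (Set.finite_Iio L))
    intro w hw
    have hwG : w ∈ Gr E F (2 * Fintype.card Q) := reach_mem hv2n hw
    refine ⟨trivial, ?_⟩
    simp only [Set.mem_Iio]
    by_contra hwl
    push_neg at hwl
    exact hempty w.2 hwl w.1 (by simpa using hwG)
  apply hv.2
  unfold Rem
  rw [if_pos (even_two_mul _)]
  exact ⟨hv2n, hfin⟩

lemma rk_odd_inf {ρ : ℕ → Q × ℕ} (hp : ∀ i, E (ρ i) (ρ (i + 1))) :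
    {i | Odd (rk E F (ρ i))}.Infinite := by
  have hne : ∀ v : Q × ℕ, ∃ k, v ∉ Gr E F (k + 1) :=
    fun v => ⟨2 * Fintype.card Q, all_notmem hE hacc v⟩
  obtain ⟨N, hN⟩ := eventually_const (g := fun i => rk E F (ρ i))
    (fun i => rk_mono hne (hp i))
  set m := rk E F (ρ N) with hm
  have hmem : ∀ i, N ≤ i → ρ i ∈ Gr E F m := by
    intro i hi
    exact mem_Gr_of_le (le_of_eq (hN i hi).symm)
  have hodd : Odd m := by
    rw [← Nat.not_even_iff_odd]
    intro hev
    have hrem : ρ N ∈ Rem E F (Gr E F m) m := rk_rem hne (ρ N)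
    unfold Rem at hrem
    rw [if_pos hev] at hrem
    have hinj : Function.Injective (fun j : ℕ => ρ (N + j)) := by
      intro a b hab
      have ha := path_level hE hp (N + a)
      have hb := path_level hE hp (N + b)
      simp only at hab
      have : (ρ (N + a)).2 = (ρ (N + b)).2 := by rw [hab]
      omega
    have hmemr : ∀ j : ℕ, (fun j : ℕ => ρ (N + j)) j ∈ Reach E (Gr E F m) (ρ N) := by
      intro j
      induction j with
      | zero => exact self_mem_reach
      | succ j ihj =>
        exact Relation.ReflTransGen.tail ihj ⟨hmem _ (by omega), hmem _ (by omega), hp _⟩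
    exact Set.infinite_of_injective_forall_mem hinj hmemr hrem.2
  apply Set.Infinite.mono (s := Set.Ici N)
  · intro i hi
    simp only [Set.mem_setOf_eq]
    rw [hN i hi]
    exact hodd
  · exact Set.Ici_infinite N

end Acc

end CoBuchiKV

theorem coBuchi_ranking_correct
    {Q : Type} [Fintype Q] (n : ℕ) (hn : 1 ≤ n)
    (hcard : Fintype.card Q = n)
    (E : Q × ℕ → Q × ℕ → Prop)
    (hE : ∀ v v' : Q × ℕ, E v v' → v'.2 = v.2 + 1)
    (F : Set Q) :
    (∀ ρ : ℕ → Q × ℕ, (∀ i, E (ρ i) (ρ (i + 1))) → {i | (ρ i).1 ∈ F}.Finite)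
    ↔ ∃ f : Q × ℕ → ℕ,
        (∀ v, f v ≤ 2 * n) ∧
        (∀ v, Odd (f v) → v.1 ∉ F) ∧
        (∀ v v', E v v' → f v' ≤ f v) ∧
        (∀ ρ : ℕ → Q × ℕ, (∀ i, E (ρ i) (ρ (i + 1))) →
          {i | Odd (f (ρ i))}.Infinite) := by
  subst hcard
  constructor
  · intro hacc
    have hne : ∀ v : Q × ℕ, ∃ k, v ∉ CoBuchiKV.Gr E F (k + 1) :=
      fun v => ⟨2 * Fintype.card Q, CoBuchiKV.all_notmem hE hacc v⟩
    refine ⟨CoBuchiKV.rk E F, ?_, ?_, ?_, ?_⟩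
    · intro v
      exact CoBuchiKV.rk_le (CoBuchiKV.all_notmem hE hacc v)
    · intro v hodd
      have hrem := CoBuchiKV.rk_rem hne v
      unfold CoBuchiKV.Rem at hrem
      rw [if_neg (by rwa [Nat.not_even_iff_odd])] at hrem
      exact hrem.2 v CoBuchiKV.self_mem_reach
    · intro v w e
      exact CoBuchiKV.rk_mono hne e
    · intro ρ hp
      exact CoBuchiKV.rk_odd_inf hE hacc hp
  · rintro ⟨f, _hb, hodd, hmono, hinf⟩ ρ hp
    obtain ⟨N, hN⟩ := CoBuchiKV.eventually_const (g := fun i => f (ρ i))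
      (fun i => hmono _ _ (hp i))
    have hm : Odd (f (ρ N)) := by
      obtain ⟨i, hi, hlt⟩ := (hinf ρ hp).exists_gt N
      simp only [Set.mem_setOf_eq] at hi
      rwa [hN i hlt.le] at hi
    apply (Set.finite_Iio N).subset
    intro i hi
    simp only [Set.mem_Iio]
    by_contra hc
    push_neg at hc
    exact hodd (ρ i) (by rw [hN i hc]; exact hm) hi
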